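/- If H(q, p, S) = (1/2) g^{ij} p_i p_j + V(q, S) with (g^{ij}) a positive semi-definite symmetric matrix, then along integral curves of the evolution vector field 𝓔_H: (i) dH/dt = 0 (first law) and (ii) dS/dt = Σ_{i,j} g^{ij} p_i p_j ≥ 0 (second law). -/

import Mathlib

noncomputable section

/-- ∂V/∂q_i at (q,S) -/
def pVq (n : ℕ) (V : (Fin n → ℝ) × ℝ → ℝ) (q : Fin n → ℝ) (S : ℝ) (i : Fin n) : ℝ :=
  fderiv ℝ V (q, S) (Pi.single i 1, 0)

/-- ∂V/∂S at (q,S) -/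
def pVS (n : ℕ) (V : (Fin n → ℝ) × ℝ → ℝ) (q : Fin n → ℝ) (S : ℝ) : ℝ :=
  fderiv ℝ V (q, S) (0, 1)

lemma fderiv_expand (n : ℕ) (V : (Fin n → ℝ) × ℝ → ℝ) (q : Fin n → ℝ) (S : ℝ)
    (v : Fin n → ℝ) (r : ℝ) :
    fderiv ℝ V (q, S) (v, r)
      = ∑ i, v i * pVq n V q S i + r * pVS n V q S := by
  have hv : ((v, r) : (Fin n → ℝ) × ℝ)
      = (∑ i, v i • ((Pi.single i 1, (0:ℝ)) : (Fin n → ℝ) × ℝ))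
        + r • (((0 : Fin n → ℝ), (1:ℝ)) : (Fin n → ℝ) × ℝ) := by
    ext x
    · simp [Prod.fst_sum, Finset.sum_apply, Pi.single_apply, Finset.sum_ite_eq', mul_comm]
    · simp [Prod.snd_sum]
  rw [hv, map_add, map_sum]
  simp only [map_smul, smul_eq_mul, pVq, pVS]

theorem two_laws_of_thermodynamics (n : ℕ)
    (g : Fin n → Fin n → ℝ)
    (hsymm : ∀ i j, g i j = g j i)
    (hpsd : ∀ v : Fin n → ℝ, 0 ≤ ∑ i, ∑ j, v i * g i j * v j)
    (V : (Fin n → ℝ) × ℝ → ℝ) (hV : Differentiable ℝ V)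
    (q : ℝ → Fin n → ℝ) (p : ℝ → Fin n → ℝ) (S : ℝ → ℝ)
    -- the evolution dynamics of H(q,p,S) = (1/2) Σ g^{ij} p_i p_j + V(q,S):
    (hq : ∀ t i, HasDerivAt (fun s => q s i) (∑ j, g i j * p t j) t)
    (hp : ∀ t i, HasDerivAt (fun s => p s i)
            (-(pVq n V (q t) (S t) i) - p t i * pVS n V (q t) (S t)) t)
    (hS : ∀ t, HasDerivAt S (∑ i, p t i * ∑ j, g i j * p t j) t) :
    -- (i) first law: conservation of total energy
    (∀ t, deriv (fun s =>
        (1/2) * ∑ i, ∑ j, g i j * p s i * p s j + V (q s, S s)) t = 0) ∧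
    -- (ii) second law: dS/dt = Σ g^{ij} p_i p_j ≥ 0
    (∀ t, deriv S t = ∑ i, ∑ j, p t i * g i j * p t j ∧ 0 ≤ deriv S t) := by
  constructor
  · intro t
    set A : Fin n → ℝ := fun i => ∑ j, g i j * p t j with hA
    set B : Fin n → ℝ := fun i => -(pVq n V (q t) (S t) i) - p t i * pVS n V (q t) (S t) with hB
    set σ : ℝ := ∑ i, p t i * A i with hσ
    -- derivative of kinetic part
    have hK : HasDerivAt (fun s => (1/2 : ℝ) * ∑ i, ∑ j, g i j * p s i * p s j)
        ((1/2 : ℝ) * ∑ i, ∑ j, g i j * (B i * p t j + p t i * B j)) t := by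
      apply HasDerivAt.const_mul
      apply HasDerivAt.fun_sum
      intro i _
      apply HasDerivAt.fun_sum
      intro j _
      have := ((hp t i).mul (hp t j)).const_mul (g i j)
      simpa [mul_assoc, mul_add] using this
    -- derivative of potential
    have hqS : HasDerivAt (fun s => (q s, S s)) ((A, σ) : (Fin n → ℝ) × ℝ) t := by
      apply HasDerivAt.prodMk
      · exact hasDerivAt_pi.mpr (fun i => hq t i)
      · exact hS t
    have hVd : HasDerivAt (fun s => V (q s, S s))
        (fderiv ℝ V (q t, S t) (A, σ)) t :=
      (hV (q t, S t)).hasFDerivAt.comp_hasDerivAt t hqS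
    have htot := hK.fun_add hVd
    rw [htot.deriv]
    rw [fderiv_expand]
    -- algebra
    have hK' : (1/2 : ℝ) * ∑ i, ∑ j, g i j * (B i * p t j + p t i * B j)
        = ∑ i, B i * A i := by
      have h1 : ∑ i, ∑ j, g i j * (B i * p t j) = ∑ i, B i * A i := by
        simp only [hA, Finset.mul_sum]
        congr 1; ext i; congr 1; ext j; ring
      have h2 : ∑ i, ∑ j, g i j * (p t i * B j) = ∑ i, B i * A i := by
        rw [Finset.sum_comm]
        simp only [hA, Finset.mul_sum]
        congr 1; ext j; congr 1; ext i; rw [hsymm j i]; ring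
      simp only [mul_add, Finset.sum_add_distrib, h1, h2]; ring
    rw [hK']
    have key : ∑ i, B i * A i
        = -(∑ i, A i * pVq n V (q t) (S t) i)
          - (∑ i, p t i * A i) * pVS n V (q t) (S t) := by
      have h1 : ∀ i ∈ Finset.univ, B i * A i
          = -(A i * pVq n V (q t) (S t) i) + (-(p t i * A i)) * pVS n V (q t) (S t) := by
        intro i _; simp only [hB]; ring
      rw [Finset.sum_congr rfl h1]
      simp only [Finset.sum_add_distrib, ← Finset.sum_mul, Finset.sum_neg_distrib]
      ring
    rw [key, hσ]; ring
  · intro t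
    have h := (hS t).deriv
    have heq : ∑ i, p t i * ∑ j, g i j * p t j = ∑ i, ∑ j, p t i * g i j * p t j := by
      congr 1; ext i; rw [Finset.mul_sum]; congr 1; ext j; ring
    rw [h, heq]
    exact ⟨rfl, hpsd (p t)⟩
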